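/- Let #_G be an n-ary generalised atom with associated nonempty set G of n-ary relations over {0,1}, and let φ₁,…,φₙ be LTL formulae. Then #_G(φ₁,…,φₙ) ≡ ⩔_{R∈G} ⋁_{(b₁,…,bₙ)∈R} ( A¹(φ₁^{b₁} ∧ … ∧ φₙ^{bₙ}) ∧ ∼⊥ ), where φ^1 := φ and φ^0 := ¬φ in negation normal form, ⩔ ranges over Boolean disjunction and ⋁ over splitting disjunction. Moreover, if #_G is downward closed (equivalently, G is closed under subsets: R∈G and R'⊆R imply R'∈G), then #_G(φ₁,…,φₙ) ≡ ⩔_{R∈G} ⋁_{(b₁,…,bₙ)∈R} A¹(φ₁^{b₁} ∧ … ∧ φₙ^{bₙ}). -/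

import Mathlib

set_option maxHeartbeats 1000000

universe u

/-- A trace over the set `α` of atomic propositions: an infinite sequence of
sets of propositions. -/
abbrev Trace (α : Type u) := ℕ → Set α

/-- LTL formulae in negation normal form. -/
inductive LTLForm (α : Type u) : Type u where
  | pos : α → LTLForm α
  | neg : α → LTLForm α
  | lor : LTLForm α → LTLForm α → LTLForm α
  | land : LTLForm α → LTLForm α → LTLForm α
  | next : LTLForm α → LTLForm α
  | luntil : LTLForm α → LTLForm α → LTLForm α
  | wuntil : LTLForm α → LTLForm α → LTLForm α

namespace LTLForm
variable {α : Type u}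

/-- Standard single-trace LTL semantics. -/
def sat (t : Trace α) : ℕ → LTLForm α → Prop
  | i, pos p => p ∈ t i
  | i, neg p => p ∉ t i
  | i, lor φ ψ => sat t i φ ∨ sat t i ψ
  | i, land φ ψ => sat t i φ ∧ sat t i ψ
  | i, next φ => sat t (i+1) φ
  | i, luntil φ ψ => ∃ k, i ≤ k ∧ sat t k ψ ∧ ∀ m, i ≤ m → m < k → sat t m φ
  | i, wuntil φ ψ => ∀ k, i ≤ k → sat t k φ ∨ ∃ m, i ≤ m ∧ m ≤ k ∧ sat t m ψ

/-- Size of an LTL formula. -/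
def size : LTLForm α → ℕ
  | pos _ => 1
  | neg _ => 1
  | lor φ ψ => φ.size + ψ.size + 1
  | land φ ψ => φ.size + ψ.size + 1
  | next φ => φ.size + 1
  | luntil φ ψ => φ.size + ψ.size + 1
  | wuntil φ ψ => φ.size + ψ.size + 1

end LTLForm

/-- Extensions of `TeamLTL` by atoms and connectives:
Boolean disjunction `⩔`, Boolean negation `∼`, inclusion atoms `⊆`,
the universal subteam quantifier `A`, the singleton subteam quantifier `A¹`
and the non-emptiness atom `∼⊥`. -/
inductive TExt : Type where
  | bdis | bneg | incl | asub | asub1 | nebot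
deriving DecidableEq

/-- Formulae of TeamLTL together with all the extensions considered in the paper
(fragments are carved out via `TeamForm.exts`). -/
inductive TeamForm (α : Type u) : Type u where
  | pos : α → TeamForm α
  | neg : α → TeamForm α
  | lor : TeamForm α → TeamForm α → TeamForm α
  | land : TeamForm α → TeamForm α → TeamForm α
  | next : TeamForm α → TeamForm α
  | luntil : TeamForm α → TeamForm α → TeamForm α
  | wuntil : TeamForm α → TeamForm α → TeamForm α
  | bdis : TeamForm α → TeamForm α → TeamForm α
  | bneg : TeamForm α → TeamForm α
  | incl : List (LTLForm α × LTLForm α) → TeamForm α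
  | asub : TeamForm α → TeamForm α
  | asub1 : TeamForm α → TeamForm α
  | nebot : TeamForm α

namespace TeamForm
variable {α : Type u}

/-- Synchronous team semantics for (extended) TeamLTL. -/
def sat : Set (Trace α) → ℕ → TeamForm α → Prop
  | T, i, pos p => ∀ t ∈ T, p ∈ t i
  | T, i, neg p => ∀ t ∈ T, p ∉ t i
  | T, i, lor φ ψ => ∃ T₁ T₂, T₁ ∪ T₂ = T ∧ sat T₁ i φ ∧ sat T₂ i ψ
  | T, i, land φ ψ => sat T i φ ∧ sat T i ψ
  | T, i, next φ => sat T (i+1) φ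
  | T, i, luntil φ ψ => ∃ k, i ≤ k ∧ sat T k ψ ∧ ∀ m, i ≤ m → m < k → sat T m φ
  | T, i, wuntil φ ψ => ∀ k, i ≤ k → sat T k φ ∨ ∃ m, i ≤ m ∧ m ≤ k ∧ sat T m ψ
  | T, i, bdis φ ψ => sat T i φ ∨ sat T i ψ
  | T, i, bneg φ => ¬ sat T i φ
  | T, i, incl ps => ∀ t ∈ T, ∃ t' ∈ T, ∀ p ∈ ps, (LTLForm.sat t i p.1 ↔ LTLForm.sat t' i p.2)
  | T, i, asub φ => ∀ S, S ⊆ T → sat S i φ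
  | T, i, asub1 φ => ∀ t ∈ T, sat {t} i φ
  | T, _, nebot => T.Nonempty

/-- The collection of extensions (atoms/connectives beyond core TeamLTL)
occurring in a formula. -/
def exts : TeamForm α → Set TExt
  | pos _ => ∅
  | neg _ => ∅
  | lor φ ψ => exts φ ∪ exts ψ
  | land φ ψ => exts φ ∪ exts ψ
  | next φ => exts φ
  | luntil φ ψ => exts φ ∪ exts ψ
  | wuntil φ ψ => exts φ ∪ exts ψ
  | bdis φ ψ => insert TExt.bdis (exts φ ∪ exts ψ)
  | bneg φ => insert TExt.bneg (exts φ)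
  | incl _ => {TExt.incl}
  | asub φ => insert TExt.asub (exts φ)
  | asub1 φ => insert TExt.asub1 (exts φ)
  | nebot => {TExt.nebot}

/-- Size of an (extended) TeamLTL formula. -/
def size : TeamForm α → ℕ
  | pos _ => 1
  | neg _ => 1
  | lor φ ψ => φ.size + ψ.size + 1
  | land φ ψ => φ.size + ψ.size + 1
  | next φ => φ.size + 1
  | luntil φ ψ => φ.size + ψ.size + 1
  | wuntil φ ψ => φ.size + ψ.size + 1
  | bdis φ ψ => φ.size + ψ.size + 1
  | bneg φ => φ.size + 1
  | incl ps => (ps.map (fun p => p.1.size + p.2.size)).sum + 1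
  | asub φ => φ.size + 1
  | asub1 φ => φ.size + 1
  | nebot => 1

end TeamForm

namespace StarBlock
variable {α : Type u}

/-- Negation (in negation normal form) of an LTL formula. -/
def ldual : LTLForm α → LTLForm α
  | .pos p => .neg p
  | .neg p => .pos p
  | .lor φ ψ => .land (ldual φ) (ldual ψ)
  | .land φ ψ => .lor (ldual φ) (ldual ψ)
  | .next φ => .next (ldual φ)
  | .luntil φ ψ => .wuntil (ldual ψ) (.land (ldual φ) (ldual ψ))
  | .wuntil φ ψ => .luntil (ldual ψ) (.land (ldual φ) (ldual ψ))

/-- `φ ↔ ψ` as an LTL formula in negation normal form. -/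
def iffL (φ ψ : LTLForm α) : LTLForm α :=
  .lor (.land φ ψ) (.land (ldual φ) (ldual ψ))

/-- A tautological LTL formula `⊤ := p ∨ ¬p`. -/
def topL [Inhabited α] : LTLForm α := .lor (.pos default) (.neg default)

/-- Big conjunction of a list of LTL formulae (`⊤` for the empty list). -/
def bigAndL [Inhabited α] : List (LTLForm α) → LTLForm α
  | [] => topL
  | [φ] => φ
  | φ :: φs => .land φ (bigAndL φs)

/-- Embedding of LTL formulae into (Team)LTL formulae. -/
def toTeam : LTLForm α → TeamForm α
  | .pos p => .pos p
  | .neg p => .neg p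
  | .lor φ ψ => .lor (toTeam φ) (toTeam ψ)
  | .land φ ψ => .land (toTeam φ) (toTeam ψ)
  | .next φ => .next (toTeam φ)
  | .luntil φ ψ => .luntil (toTeam φ) (toTeam ψ)
  | .wuntil φ ψ => .wuntil (toTeam φ) (toTeam ψ)

/-- The translation `φ ↦ φ*` from `TeamLTL(⊆,⩔)` to LTL: replace each Boolean
disjunction `⩔` by `∨`, and each inclusion atom `φ₁,…,φₙ ⊆ ψ₁,…,ψₙ` by the
conjunction `⋀_{j≤n} (φⱼ ↔ ψⱼ)`.
(The clauses for connectives outside of `TeamLTL(⊆,⩔)` are irrelevant.) -/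
def star [Inhabited α] : TeamForm α → LTLForm α
  | .pos p => .pos p
  | .neg p => .neg p
  | .lor φ ψ => .lor (star φ) (star ψ)
  | .land φ ψ => .land (star φ) (star ψ)
  | .next φ => .next (star φ)
  | .luntil φ ψ => .luntil (star φ) (star ψ)
  | .wuntil φ ψ => .wuntil (star φ) (star ψ)
  | .bdis φ ψ => .lor (star φ) (star ψ)
  | .incl ps => bigAndL (ps.map fun p => iffL p.1 p.2)
  | .bneg φ => star φ
  | .asub φ => star φ
  | .asub1 φ => star φ
  | .nebot => topL

/-- A formula is 1-coherent if its satisfaction by a team is equivalent to its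
satisfaction by all singleton subteams. -/
def OneCoherent (φ : TeamForm α) : Prop :=
  ∀ (T : Set (Trace α)) (i : ℕ),
    TeamForm.sat T i φ ↔ ∀ t ∈ T, TeamForm.sat {t} i φ

end StarBlock

namespace GAtom
open StarBlock
variable {α : Type u}

/-- The Boolean truth value `⟦φ⟧_{(t,i)}` of an LTL formula. -/
noncomputable def tv (t : Trace α) (i : ℕ) (φ : LTLForm α) : Bool :=
  @ite _ (LTLForm.sat t i φ) (Classical.propDecidable _) true false

/-- Semantics of the generalised atom `#_G(φ₁,…,φₙ)` associated with the set
`G` of `n`-ary Boolean relations: the set of Boolean value combinations of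
`φ₁,…,φₙ` realised by the traces of the team belongs to `G`. -/
def gsat (n : ℕ) (G : Finset (Finset (Fin n → Bool))) (args : Fin n → LTLForm α)
    (T : Set (Trace α)) (i : ℕ) : Prop :=
  ∃ R ∈ G, {f : Fin n → Bool | ∃ t ∈ T, (fun j => tv t i (args j)) = f} = (↑R : Set (Fin n → Bool))

/-- `φ^1 := φ` and `φ^0 := ¬φ` in negation normal form. -/
def bpow (b : Bool) (φ : LTLForm α) : LTLForm α := if b then φ else ldual φ

/-- `⊥ := p ∧ ¬p`: a TeamLTL formula satisfied exactly by the empty team. -/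
def botT [Inhabited α] : TeamForm α := .land (.pos default) (.neg default)

/-- A formula satisfied by no team at all (used only for empty Boolean
disjunctions, which do not occur below). -/
def neverT [Inhabited α] : TeamForm α := .land .nebot botT

/-- Big Boolean disjunction `⩔` of a list of formulae. -/
def bigBdis [Inhabited α] : List (TeamForm α) → TeamForm α
  | [] => neverT
  | [φ] => φ
  | φ :: φs => .bdis φ (bigBdis φs)

/-- Big splitting disjunction `∨` of a list of formulae (`⊥` for the empty
list). -/
def bigOrT [Inhabited α] : List (TeamForm α) → TeamForm α
  | [] => botT
  | [φ] => φ
  | φ :: φs => .lor φ (bigOrT φs)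

/-- The formula `⩔_{R∈G} ⋁_{b∈R} ( A¹(φ₁^{b₁} ∧ … ∧ φₙ^{bₙ}) ∧ ∼⊥ )`. -/
noncomputable def atomFormulaAll [Inhabited α] (n : ℕ)
    (G : Finset (Finset (Fin n → Bool))) (args : Fin n → LTLForm α) : TeamForm α :=
  bigBdis (G.toList.map fun R =>
    bigOrT (R.toList.map fun b =>
      TeamForm.land
        (TeamForm.asub1 (toTeam (bigAndL (List.ofFn fun j => bpow (b j) (args j)))))
        TeamForm.nebot))

/-- The formula `⩔_{R∈G} ⋁_{b∈R} A¹(φ₁^{b₁} ∧ … ∧ φₙ^{bₙ})`. -/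
noncomputable def atomFormulaDC [Inhabited α] (n : ℕ)
    (G : Finset (Finset (Fin n → Bool))) (args : Fin n → LTLForm α) : TeamForm α :=
  bigBdis (G.toList.map fun R =>
    bigOrT (R.toList.map fun b =>
      TeamForm.asub1 (toTeam (bigAndL (List.ofFn fun j => bpow (b j) (args j))))))

end GAtom

namespace Stmt13
open GAtom
variable {α : Type u}

open StarBlock

lemma ldual_sat (φ : LTLForm α) : ∀ t i, LTLForm.sat t i (ldual φ) ↔ ¬ LTLForm.sat t i φ := by
  induction φ with
  | pos p => intro t i; simp [ldual, LTLForm.sat]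
  | neg p => intro t i; simp [ldual, LTLForm.sat]
  | lor φ ψ ih1 ih2 => intro t i; simp [ldual, LTLForm.sat, ih1, ih2]
  | land φ ψ ih1 ih2 => intro t i; simp [ldual, LTLForm.sat, ih1, ih2]; tauto
  | next φ ih => intro t i; simp [ldual, LTLForm.sat, ih]
  | luntil φ ψ ih1 ih2 =>
      intro t i
      show (∀ k, i ≤ k → _ ∨ ∃ m, i ≤ m ∧ m ≤ k ∧ _) ↔ _
      simp only [LTLForm.sat, ih1, ih2]
      constructor
      · rintro h ⟨k, hk, hQ, hP⟩
        rcases h k hk with h' | ⟨m, him, hmk, hnP, hnQ⟩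
        · exact h' hQ
        · rcases lt_or_eq_of_le hmk with hlt | rfl
          · exact hnP (hP m him hlt)
          · exact hnQ hQ
      · intro h k hk
        by_cases hQ : LTLForm.sat t k ψ
        · right
          have hex : ∃ m, i ≤ m ∧ m < k ∧ ¬ LTLForm.sat t m φ := by
            by_contra hc
            push_neg at hc
            exact h ⟨k, hk, hQ, fun m hm hlt => hc m hm hlt⟩
          obtain ⟨m, him, hmk, hnP⟩ := hex
          classical
          have hex2 : ∃ m', i ≤ m' ∧ ¬ LTLForm.sat t m' φ := ⟨m, him, hnP⟩
          obtain ⟨him0, hnP0⟩ := Nat.find_spec hex2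
          have hm0le : Nat.find hex2 ≤ m := Nat.find_min' hex2 ⟨him, hnP⟩
          refine ⟨Nat.find hex2, him0, le_of_lt (lt_of_le_of_lt hm0le hmk), hnP0, ?_⟩
          intro hQ0
          apply h
          refine ⟨Nat.find hex2, him0, hQ0, fun m' hm' hlt => ?_⟩
          by_contra hnp
          exact Nat.find_min hex2 hlt ⟨hm', hnp⟩
        · exact Or.inl hQ
  | wuntil φ ψ ih1 ih2 =>
      intro t i
      show (∃ k, i ≤ k ∧ (_ ∧ _) ∧ ∀ m, i ≤ m → m < k → _) ↔ _
      simp only [LTLForm.sat, ih1, ih2]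
      constructor
      · rintro ⟨k, hk, ⟨hnP, hnQ⟩, hall⟩ h
        rcases h k hk with hP | ⟨m, him, hmk, hQ⟩
        · exact hnP hP
        · rcases lt_or_eq_of_le hmk with hlt | rfl
          · exact hall m him hlt hQ
          · exact hnQ hQ
      · intro h
        push_neg at h
        obtain ⟨k, hk, hnP, hall⟩ := h
        exact ⟨k, hk, ⟨hnP, hall k hk le_rfl⟩, fun m hm hlt => hall m hm (le_of_lt hlt)⟩

lemma bpow_sat (b : Bool) (φ : LTLForm α) (t : Trace α) (i : ℕ) :
    LTLForm.sat t i (bpow b φ) ↔ tv t i φ = b := by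
  by_cases h : LTLForm.sat t i φ <;> cases b <;>
    simp [bpow, tv, h, ldual_sat]

lemma toTeam_empty (φ : LTLForm α) : ∀ i, TeamForm.sat (∅ : Set (Trace α)) i (StarBlock.toTeam φ) := by
  induction φ with
  | pos p => intro i; simp [StarBlock.toTeam, TeamForm.sat]
  | neg p => intro i; simp [StarBlock.toTeam, TeamForm.sat]
  | lor φ ψ ih1 ih2 => intro i; exact ⟨∅, ∅, by simp, ih1 i, ih2 i⟩
  | land φ ψ ih1 ih2 => intro i; exact ⟨ih1 i, ih2 i⟩
  | next φ ih => intro i; exact ih (i+1)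
  | luntil φ ψ ih1 ih2 => intro i; exact ⟨i, le_rfl, ih2 i, fun m _ _ => ih1 m⟩
  | wuntil φ ψ ih1 ih2 => intro i; exact fun k _ => Or.inl (ih1 k)

lemma toTeam_singleton (φ : LTLForm α) :
    ∀ (t : Trace α) (i : ℕ), TeamForm.sat {t} i (StarBlock.toTeam φ) ↔ LTLForm.sat t i φ := by
  induction φ with
  | pos p => intro t i; simp [StarBlock.toTeam, TeamForm.sat, LTLForm.sat]
  | neg p => intro t i; simp [StarBlock.toTeam, TeamForm.sat, LTLForm.sat]
  | lor φ ψ ih1 ih2 =>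
      intro t i
      constructor
      · rintro ⟨T₁, T₂, hu, h1, h2⟩
        have ht : t ∈ T₁ ∪ T₂ := hu ▸ rfl
        rcases ht with ht | ht
        · have : T₁ = {t} := by
            apply Set.eq_singleton_iff_unique_mem.2
            exact ⟨ht, fun x hx => by
              have : x ∈ ({t} : Set (Trace α)) := hu ▸ Set.mem_union_left _ hx
              exact this⟩
          exact Or.inl ((ih1 t i).1 (this ▸ h1))
        · have : T₂ = {t} := by
            apply Set.eq_singleton_iff_unique_mem.2
            exact ⟨ht, fun x hx => by
              have : x ∈ ({t} : Set (Trace α)) := hu ▸ Set.mem_union_right _ hx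
              exact this⟩
          exact Or.inr ((ih2 t i).1 (this ▸ h2))
      · rintro (h | h)
        · exact ⟨{t}, ∅, by simp, (ih1 t i).2 h, toTeam_empty ψ i⟩
        · exact ⟨∅, {t}, by simp, toTeam_empty φ i, (ih2 t i).2 h⟩
  | land φ ψ ih1 ih2 => intro t i; exact and_congr (ih1 t i) (ih2 t i)
  | next φ ih => intro t i; exact ih t (i+1)
  | luntil φ ψ ih1 ih2 =>
      intro t i
      show (∃ k, _ ∧ _ ∧ _) ↔ _
      simp only [ih1, ih2]
      rfl
  | wuntil φ ψ ih1 ih2 =>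
      intro t i
      show (∀ k, i ≤ k → _ ∨ _) ↔ _
      simp only [ih1, ih2]
      rfl

lemma topL_sat [Inhabited α] (t : Trace α) (i : ℕ) : LTLForm.sat t i (StarBlock.topL : LTLForm α) := by
  show LTLForm.sat t i (.lor (.pos default) (.neg default))
  rcases em ((default : α) ∈ t i) with h | h
  · exact Or.inl h
  · exact Or.inr h

lemma bigAndL_sat [Inhabited α] (l : List (LTLForm α)) (t : Trace α) (i : ℕ) :
    LTLForm.sat t i (StarBlock.bigAndL l) ↔ ∀ φ ∈ l, LTLForm.sat t i φ := by
  induction l with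
  | nil => simpa [StarBlock.bigAndL] using topL_sat t i
  | cons φ l ih =>
      cases l with
      | nil => simp [StarBlock.bigAndL]
      | cons ψ l' =>
          show LTLForm.sat t i (.land φ (StarBlock.bigAndL (ψ :: l'))) ↔ _
          rw [show LTLForm.sat t i (.land φ (StarBlock.bigAndL (ψ :: l'))) ↔
              (LTLForm.sat t i φ ∧ LTLForm.sat t i (StarBlock.bigAndL (ψ :: l'))) from Iff.rfl, ih]
          simp

lemma botT_sat [Inhabited α] (T : Set (Trace α)) (i : ℕ) :
    TeamForm.sat T i (botT : TeamForm α) ↔ T = ∅ := by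
  constructor
  · rintro ⟨h1, h2⟩
    ext t
    simp only [Set.mem_empty_iff_false, iff_false]
    intro ht
    exact h2 t ht (h1 t ht)
  · rintro rfl
    exact ⟨fun t ht => ht.elim, fun t ht => ht.elim⟩

lemma neverT_sat [Inhabited α] (T : Set (Trace α)) (i : ℕ) :
    ¬ TeamForm.sat T i (neverT : TeamForm α) := by
  rintro ⟨⟨t, ht⟩, hbot⟩
  have := (botT_sat T i).1 hbot
  rw [this] at ht
  exact ht

lemma bigBdis_sat [Inhabited α] (l : List (TeamForm α)) (T : Set (Trace α)) (i : ℕ) :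
    TeamForm.sat T i (bigBdis l) ↔ ∃ φ ∈ l, TeamForm.sat T i φ := by
  induction l with
  | nil => simpa [bigBdis] using neverT_sat T i
  | cons φ l ih =>
      cases l with
      | nil => simp [bigBdis]
      | cons ψ l' =>
          show (TeamForm.sat T i φ ∨ TeamForm.sat T i (bigBdis (ψ :: l'))) ↔ _
          rw [ih]
          simp

section Chi

variable {n : ℕ} (args : Fin n → LTLForm α)

/-- `φ₁^{b₁} ∧ … ∧ φₙ^{bₙ}`. -/
noncomputable def chi [Inhabited α] (b : Fin n → Bool) : LTLForm α :=
  StarBlock.bigAndL (List.ofFn fun j => bpow (b j) (args j))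

lemma chi_sat [Inhabited α] (b : Fin n → Bool) (t : Trace α) (i : ℕ) :
    TeamForm.sat {t} i (StarBlock.toTeam (chi args b)) ↔ (fun j => tv t i (args j)) = b := by
  rw [toTeam_singleton, chi, bigAndL_sat]
  constructor
  · intro h
    funext j
    have := h (bpow (b j) (args j)) (by simp [List.mem_ofFn])
    exact (bpow_sat _ _ _ _).1 this
  · intro h φ hφ
    simp only [List.mem_ofFn] at hφ
    obtain ⟨j, rfl⟩ := hφ
    exact (bpow_sat _ _ _ _).2 (congrFun h j)

lemma bigOrT_all [Inhabited α] (l : List (Fin n → Bool)) (T : Set (Trace α)) (i : ℕ) :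
    TeamForm.sat T i (bigOrT (l.map fun b =>
        TeamForm.land (TeamForm.asub1 (StarBlock.toTeam (chi args b))) TeamForm.nebot)) ↔
      ((∀ t ∈ T, (fun j => tv t i (args j)) ∈ l) ∧
        ∀ b ∈ l, ∃ t ∈ T, (fun j => tv t i (args j)) = b) := by
  induction l generalizing T with
  | nil =>
      simp only [List.map_nil]
      rw [show bigOrT ([] : List (TeamForm α)) = botT from rfl, botT_sat]
      constructor
      · rintro rfl; simp
      · rintro ⟨h, -⟩
        ext t; simp only [Set.mem_empty_iff_false, iff_false]
        intro ht; simpa using h t ht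
  | cons b l ih =>
      cases l with
      | nil =>
          show TeamForm.sat T i (TeamForm.land (TeamForm.asub1 _) TeamForm.nebot) ↔ _
          constructor
          · rintro ⟨h1, ⟨t0, ht0⟩⟩
            refine ⟨fun t ht => by simpa using (chi_sat args b t i).1 (h1 t ht), ?_⟩
            intro b' hb'
            simp only [List.mem_singleton] at hb'
            subst hb'
            exact ⟨t0, ht0, (chi_sat args b' t0 i).1 (h1 t0 ht0)⟩
          · rintro ⟨h1, h2⟩
            obtain ⟨t0, ht0, -⟩ := h2 b (by simp)
            refine ⟨fun t ht => (chi_sat args b t i).2 ?_, ⟨t0, ht0⟩⟩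
            simpa using h1 t ht
      | cons b' l' =>
          show (∃ T₁ T₂, T₁ ∪ T₂ = T ∧
              TeamForm.sat T₁ i (TeamForm.land (TeamForm.asub1 (StarBlock.toTeam (chi args b))) TeamForm.nebot) ∧
              TeamForm.sat T₂ i (bigOrT ((b' :: l').map fun c =>
                TeamForm.land (TeamForm.asub1 (StarBlock.toTeam (chi args c))) TeamForm.nebot))) ↔ _
          constructor
          · rintro ⟨T₁, T₂, rfl, ⟨h1, ⟨t0, ht0⟩⟩, h2⟩
            rw [ih] at h2
            obtain ⟨h2a, h2b⟩ := h2
            constructor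
            · rintro t (ht | ht)
              · have := (chi_sat args b t i).1 (h1 t ht)
                simp [this]
              · exact List.mem_cons_of_mem _ (h2a t ht)
            · intro c hc
              rcases List.mem_cons.1 hc with rfl | hc
              · exact ⟨t0, Or.inl ht0, (chi_sat args c t0 i).1 (h1 t0 ht0)⟩
              · obtain ⟨t, ht, htc⟩ := h2b c hc
                exact ⟨t, Or.inr ht, htc⟩
          · rintro ⟨h1, h2⟩
            refine ⟨{t ∈ T | (fun j => tv t i (args j)) = b},
                    {t ∈ T | (fun j => tv t i (args j)) ∈ b' :: l'}, ?_, ⟨?_, ?_⟩, ?_⟩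
            · ext t
              constructor
              · rintro (⟨ht, -⟩ | ⟨ht, -⟩) <;> exact ht
              · intro ht
                rcases List.mem_cons.1 (h1 t ht) with hb | hb
                · exact Or.inl ⟨ht, hb⟩
                · exact Or.inr ⟨ht, hb⟩
            · rintro t ⟨ht, htb⟩
              exact (chi_sat args b t i).2 htb
            · obtain ⟨t, ht, htb⟩ := h2 b List.mem_cons_self
              exact ⟨t, ht, htb⟩
            · rw [ih]
              constructor
              · rintro t ⟨-, ht⟩; exact ht
              · intro c hc
                obtain ⟨t, ht, htc⟩ := h2 c (List.mem_cons_of_mem _ hc)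
                exact ⟨t, ⟨ht, htc ▸ hc⟩, htc⟩

lemma bigOrT_dc [Inhabited α] (l : List (Fin n → Bool)) (T : Set (Trace α)) (i : ℕ) :
    TeamForm.sat T i (bigOrT (l.map fun b =>
        TeamForm.asub1 (StarBlock.toTeam (chi args b)))) ↔
      ∀ t ∈ T, (fun j => tv t i (args j)) ∈ l := by
  induction l generalizing T with
  | nil =>
      simp only [List.map_nil]
      rw [show bigOrT ([] : List (TeamForm α)) = botT from rfl, botT_sat]
      constructor
      · rintro rfl; simp
      · intro h
        ext t; simp only [Set.mem_empty_iff_false, iff_false]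
        intro ht; simpa using h t ht
  | cons b l ih =>
      cases l with
      | nil =>
          show TeamForm.sat T i (TeamForm.asub1 _) ↔ _
          constructor
          · intro h1 t ht
            simpa using (chi_sat args b t i).1 (h1 t ht)
          · intro h1 t ht
            exact (chi_sat args b t i).2 (by simpa using h1 t ht)
      | cons b' l' =>
          show (∃ T₁ T₂, T₁ ∪ T₂ = T ∧
              TeamForm.sat T₁ i (TeamForm.asub1 (StarBlock.toTeam (chi args b))) ∧
              TeamForm.sat T₂ i (bigOrT ((b' :: l').map fun c =>
                TeamForm.asub1 (StarBlock.toTeam (chi args c))))) ↔ _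
          constructor
          · rintro ⟨T₁, T₂, rfl, h1, h2⟩
            rw [ih] at h2
            rintro t (ht | ht)
            · have := (chi_sat args b t i).1 (h1 t ht)
              simp [this]
            · exact List.mem_cons_of_mem _ (h2 t ht)
          · intro h1
            refine ⟨{t ∈ T | (fun j => tv t i (args j)) = b},
                    {t ∈ T | (fun j => tv t i (args j)) ∈ b' :: l'}, ?_, ?_, ?_⟩
            · ext t
              constructor
              · rintro (⟨ht, -⟩ | ⟨ht, -⟩) <;> exact ht
              · intro ht
                rcases List.mem_cons.1 (h1 t ht) with hb | hb
                · exact Or.inl ⟨ht, hb⟩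
                · exact Or.inr ⟨ht, hb⟩
            · rintro t ⟨ht, htb⟩
              exact (chi_sat args b t i).2 htb
            · rw [ih]
              rintro t ⟨-, ht⟩; exact ht

end Chi

/-- Let `#_G` be an `n`-ary generalised atom with associated
nonempty set `G` of `n`-ary Boolean relations, and let `φ₁,…,φₙ` be LTL
formulae.  Then
`#_G(φ₁,…,φₙ) ≡ ⩔_{R∈G} ⋁_{b∈R} ( A¹(φ₁^{b₁}∧…∧φₙ^{bₙ}) ∧ ∼⊥ )`.
Moreover, if `#_G` is downward closed (i.e. `G` is closed under subsets),
then `#_G(φ₁,…,φₙ) ≡ ⩔_{R∈G} ⋁_{b∈R} A¹(φ₁^{b₁}∧…∧φₙ^{bₙ})`. -/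
theorem stmt_13 [Inhabited α] (n : ℕ) (G : Finset (Finset (Fin n → Bool)))
    (hG : G.Nonempty) (args : Fin n → LTLForm α) :
    (∀ (T : Set (Trace α)) (i : ℕ),
        gsat n G args T i ↔ TeamForm.sat T i (atomFormulaAll n G args)) ∧
    ((∀ R ∈ G, ∀ R' ⊆ R, R' ∈ G) →
      ∀ (T : Set (Trace α)) (i : ℕ),
        gsat n G args T i ↔ TeamForm.sat T i (atomFormulaDC n G args)) := by
  constructor
  · intro T i
    rw [show atomFormulaAll n G args = bigBdis (G.toList.map fun R =>
        bigOrT (R.toList.map fun b =>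
          TeamForm.land (TeamForm.asub1 (StarBlock.toTeam (chi args b))) TeamForm.nebot)) from rfl,
      bigBdis_sat]
    constructor
    · rintro ⟨R, hR, heq⟩
      refine ⟨_, List.mem_map.2 ⟨R, Finset.mem_toList.2 hR, rfl⟩, ?_⟩
      rw [bigOrT_all]
      constructor
      · intro t ht
        rw [Finset.mem_toList, ← Finset.mem_coe, ← heq]
        exact ⟨t, ht, rfl⟩
      · intro b hb
        rw [Finset.mem_toList, ← Finset.mem_coe, ← heq] at hb
        exact hb
    · rintro ⟨ψ, hψ, hsat⟩
      obtain ⟨R, hR, rfl⟩ := List.mem_map.1 hψ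
      rw [bigOrT_all] at hsat
      refine ⟨R, Finset.mem_toList.1 hR, ?_⟩
      ext f
      simp only [Set.mem_setOf_eq, Finset.mem_coe]
      constructor
      · rintro ⟨t, ht, rfl⟩
        exact Finset.mem_toList.1 (hsat.1 t ht)
      · intro hf
        exact hsat.2 f (Finset.mem_toList.2 hf)
  · intro hdc T i
    rw [show atomFormulaDC n G args = bigBdis (G.toList.map fun R =>
        bigOrT (R.toList.map fun b =>
          TeamForm.asub1 (StarBlock.toTeam (chi args b)))) from rfl,
      bigBdis_sat]
    constructor
    · rintro ⟨R, hR, heq⟩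
      refine ⟨_, List.mem_map.2 ⟨R, Finset.mem_toList.2 hR, rfl⟩, ?_⟩
      rw [bigOrT_dc]
      intro t ht
      rw [Finset.mem_toList, ← Finset.mem_coe, ← heq]
      exact ⟨t, ht, rfl⟩
    · rintro ⟨ψ, hψ, hsat⟩
      obtain ⟨R, hR, rfl⟩ := List.mem_map.1 hψ
      rw [bigOrT_dc] at hsat
      classical
      refine ⟨R.filter (fun b => ∃ t ∈ T, (fun j => tv t i (args j)) = b), ?_, ?_⟩
      · exact hdc R (Finset.mem_toList.1 hR) _ (Finset.filter_subset _ _)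
      · ext f
        simp only [Set.mem_setOf_eq, Finset.coe_filter, Set.mem_setOf_eq]
        constructor
        · rintro ⟨t, ht, rfl⟩
          exact ⟨Finset.mem_toList.1 (hsat t ht), ⟨t, ht, rfl⟩⟩
        · rintro ⟨-, h⟩
          exact h

end Stmt13
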